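/- The function Ψ(x,y) = ( (y−1)/y − (1−x)(2x+1)/(2y) )·( 1 − ((y−1)/y)·((1+x)/2) ) − ( (1−x)(y−2) / (2y − (1−x)(2x+1)) )·(1 + 1/y) is nonnegative for all (x,y) ∈ [0,1] × [3,∞). -/

import Mathlib

/-- The function `Ψ(x,y)` from Lemma 3.4. -/
noncomputable def PsiFun (x y : ℝ) : ℝ :=
  ((y - 1) / y - (1 - x) * (2 * x + 1) / (2 * y)) * (1 - (y - 1) / y * ((1 + x) / 2)) -
    (1 - x) * (y - 2) / (2 * y - (1 - x) * (2 * x + 1)) * (1 + 1 / y)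

theorem Psi_nonneg : ∀ x y : ℝ, x ∈ Set.Icc (0 : ℝ) 1 → y ∈ Set.Ici (3 : ℝ) →
    0 ≤ PsiFun x y := by
  rintro x y ⟨hx0, hx1⟩ hy
  simp only [Set.mem_Ici] at hy
  have hy0 : (0:ℝ) < y := by linarith
  have hD : 0 < 2 * y - (1 - x) * (2 * x + 1) := by nlinarith
  have hP : (0:ℝ) ≤ 2*x*y^2 + 6*x^2*y^2 - 4*x^3*y^2 - 19/2*x*y + 3/2*y - 7/2*x^2*y
      + 11/2*x^3*y + 7/2*x + 3/2 - 3/2*x^2 - 11/2*x^3 + 4*x^4*y - 2*x^5*y + 2*x^5 := by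
    nlinarith [sq_nonneg (y-3), mul_nonneg hx0 (sq_nonneg (y-3)),
      mul_nonneg (mul_nonneg hx0 hx0) (sq_nonneg (y-3)),
      mul_nonneg (mul_nonneg hx0 hx0) (sub_nonneg.2 hx1),
      mul_nonneg (mul_nonneg (mul_nonneg hx0 hx0) hx0) (sub_nonneg.2 hx1),
      mul_nonneg (mul_nonneg (mul_nonneg (mul_nonneg hx0 hx0) hx0) hx0) (sub_nonneg.2 hx1),
      mul_nonneg (mul_nonneg hx0 (sub_nonneg.2 hx1)) (sub_nonneg.2 hy),
      mul_nonneg (mul_nonneg (mul_nonneg hx0 hx0) (sub_nonneg.2 hx1)) (sub_nonneg.2 hy),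
      mul_nonneg (mul_nonneg (mul_nonneg (mul_nonneg hx0 hx0) hx0) (sub_nonneg.2 hx1)) (sub_nonneg.2 hy),
      mul_nonneg (mul_nonneg (mul_nonneg (mul_nonneg (mul_nonneg hx0 hx0) hx0) hx0) (sub_nonneg.2 hx1)) (sub_nonneg.2 hy),
      mul_nonneg (mul_nonneg hx0 hx0) (sub_nonneg.2 hy),
      mul_nonneg hx0 (sub_nonneg.2 hy)]
  have key : PsiFun x y = (2*x*y^2 + 6*x^2*y^2 - 4*x^3*y^2 - 19/2*x*y + 3/2*y - 7/2*x^2*y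
      + 11/2*x^3*y + 7/2*x + 3/2 - 3/2*x^2 - 11/2*x^3 + 4*x^4*y - 2*x^5*y + 2*x^5)
      / (2 * y^2 * (2 * y - (1 - x) * (2 * x + 1))) := by
    rw [PsiFun, eq_div_iff (by positivity)]
    have ht : (1 - x) * (y - 2) / (2 * y - (1 - x) * (2 * x + 1)) * (2 * y - (1 - x) * (2 * x + 1)) = (1 - x) * (y - 2) := div_mul_cancel₀ _ hD.ne'
    generalize (1 - x) * (y - 2) / (2 * y - (1 - x) * (2 * x + 1)) = t at ht ⊢
    field_simp
    linear_combination (-4 * y * (y + 1)) * ht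
  rw [key]
  positivity
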